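/- Let {a_k}_{k=1}^∞ be a sequence of nonnegative real numbers with a₁ > 0 and θ > 0 a constant such that a_k ≥ a_{k+1} + θ·a_{k+1}⁴ for all k ≥ 1. Then for all k ≥ 1, a_k ≤ ( 1/a₁³ + (k−1)·3θ·(3θ·a₁³ + 1)^{−1} )^{−1/3}; in particular {a_k} converges to zero at an O(1/k^{1/3}) rate. -/

import Mathlib

lemma cube_rpow_neg_third (v : ℝ) (hv : 0 < v) : (v ^ (-(1/3) : ℝ)) ^ 3 = v⁻¹ := by
  rw [← Real.rpow_natCast (v ^ (-(1/3):ℝ)) 3, ← Real.rpow_mul hv.le]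
  norm_num [Real.rpow_neg_one]

lemma cube_rpow_third (v : ℝ) (hv : 0 ≤ v) : (v ^ ((1:ℝ)/3)) ^ 3 = v := by
  rw [← Real.rpow_natCast (v ^ ((1:ℝ)/3)) 3, ← Real.rpow_mul hv]
  norm_num

lemma le_of_cube_le {x y : ℝ} (hy : 0 ≤ y) (h : x ^ 3 ≤ y ^ 3) : x ≤ y := by
  by_contra hc
  push_neg at hc
  exact absurd h (not_le.2 (pow_lt_pow_left₀ hc hy (by norm_num)))

lemma step_lemma (θ A c u x : ℝ) (hθ : 0 < θ) (hA : 0 < A)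
    (hc : c * (3 * θ * A + 1) = 3 * θ) (hc0 : 0 < c)
    (hu : 1 ≤ u * A) (hu0 : 0 < u) (hx : 0 ≤ x)
    (hle : x + θ * x ^ 4 ≤ u ^ (-(1/3) : ℝ)) :
    x ≤ (u + c) ^ (-(1/3) : ℝ) := by
  have hv0 : 0 < u + c := by linarith
  have hy0 : 0 < (u + c) ^ (-(1/3) : ℝ) := by positivity
  set y : ℝ := (u + c) ^ (-(1/3) : ℝ) with hydef
  have hy3 : y ^ 3 = (u + c)⁻¹ := cube_rpow_neg_third _ hv0
  have hcle : c ≤ 3 * θ := by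
    nlinarith [mul_nonneg hc0.le (show (0:ℝ) ≤ 3 * θ * A by positivity)]
  have h1 : c * (u + c) ≤ 3 * θ * u := by
    nlinarith [mul_le_mul_of_nonneg_right hu (mul_pos (mul_pos (by norm_num : (0:ℝ) < 3) hθ) hc0).le]
  have hpoly : (u + c) ^ 4 ≤ u * ((u + c) + θ) ^ 3 := by
    nlinarith [sq_nonneg (u + c), mul_pos hv0 hv0, mul_pos hθ hu0,
      mul_pos (mul_pos hθ hθ) hu0, mul_nonneg (mul_nonneg hv0.le hv0.le) (sub_nonneg.2 h1)]
  have hstep : u ^ (-(1/3) : ℝ) ≤ y + θ * y ^ 4 := by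
    refine le_of_cube_le (by positivity) ?_
    rw [cube_rpow_neg_third u hu0]
    have hexp : (y + θ * y ^ 4) ^ 3 = y ^ 3 * (1 + θ * y ^ 3) ^ 3 := by ring
    rw [hexp, hy3]
    have hid : (u + c)⁻¹ * (1 + θ * (u + c)⁻¹) ^ 3 = ((u + c) + θ) ^ 3 / (u + c) ^ 4 := by
      field_simp
    rw [hid, inv_eq_one_div, div_le_div_iff₀ hu0 (by positivity)]
    nlinarith
  have hchain : x + θ * x ^ 4 ≤ y + θ * y ^ 4 := le_trans hle hstep
  by_contra hcon
  push_neg at hcon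
  have h4 : y ^ 4 ≤ x ^ 4 := pow_le_pow_left₀ hy0.le hcon.le 4
  nlinarith

theorem nonneg_recurrence_one_over_k_cuberoot
    (a : ℕ → ℝ) (ha : ∀ k ≥ 1, 0 ≤ a k) (ha1 : 0 < a 1) (θ : ℝ) (hθ : 0 < θ)
    (hrec : ∀ k ≥ 1, a (k + 1) + θ * a (k + 1) ^ 4 ≤ a k) :
    (∀ k ≥ 1, a k ≤
      (1 / a 1 ^ 3 + ((k : ℝ) - 1) * (3 * θ) * (3 * θ * a 1 ^ 3 + 1)⁻¹) ^ (-(1 / 3) : ℝ)) ∧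
    ∃ M > (0 : ℝ), ∀ k ≥ 1, a k ≤ M / (k : ℝ) ^ ((1 : ℝ) / 3) := by
  have hA : 0 < a 1 ^ 3 := by positivity
  obtain ⟨c, hcdef⟩ : ∃ c : ℝ, c = 3 * θ * (3 * θ * a 1 ^ 3 + 1)⁻¹ := ⟨_, rfl⟩
  have hden : 0 < 3 * θ * a 1 ^ 3 + 1 := by positivity
  have hc0 : 0 < c := by rw [hcdef]; positivity
  have hcid : c * (3 * θ * a 1 ^ 3 + 1) = 3 * θ := by
    rw [hcdef]; field_simp
  -- main bound
  have key : ∀ k, 1 ≤ k → a k ≤ (1 / a 1 ^ 3 + ((k : ℝ) - 1) * c) ^ (-(1/3) : ℝ) := by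
    intro k hk
    induction k, hk using Nat.le_induction with
    | base =>
      have he : (1 / a 1 ^ 3 + (((1:ℕ) : ℝ) - 1) * c) = (a 1 ^ 3)⁻¹ := by push_cast; ring
      rw [he]
      have hpos : (0:ℝ) < (a 1 ^ 3)⁻¹ := by positivity
      refine le_of_cube_le (by positivity) ?_
      rw [cube_rpow_neg_third _ hpos, inv_inv]
    | succ k hk ih =>
      have hk1 : (1:ℝ) ≤ (k:ℝ) := by exact_mod_cast hk
      have hnn : 0 ≤ ((k:ℝ) - 1) * c := mul_nonneg (by linarith) hc0.le
      have hu0 : 0 < 1 / a 1 ^ 3 + ((k:ℝ) - 1) * c := by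
        have : 0 < 1 / a 1 ^ 3 := by positivity
        linarith
      have huA : 1 ≤ (1 / a 1 ^ 3 + ((k:ℝ) - 1) * c) * a 1 ^ 3 := by
        have h1 : (1 / a 1 ^ 3) * a 1 ^ 3 = 1 := by field_simp
        nlinarith [mul_nonneg hnn hA.le]
      have hx0 : 0 ≤ a (k+1) := ha (k+1) (by omega)
      have hle : a (k + 1) + θ * a (k + 1) ^ 4 ≤
          (1 / a 1 ^ 3 + ((k:ℝ) - 1) * c) ^ (-(1/3) : ℝ) :=
        le_trans (hrec k hk) ih
      have hres := step_lemma θ (a 1 ^ 3) c (1 / a 1 ^ 3 + ((k:ℝ) - 1) * c) (a (k+1))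
        hθ hA hcid hc0 huA hu0 hx0 hle
      have hcast : (1 / a 1 ^ 3 + (((k+1:ℕ) : ℝ) - 1) * c) =
          (1 / a 1 ^ 3 + ((k:ℝ) - 1) * c) + c := by push_cast; ring
      rw [hcast]
      exact hres
  constructor
  · intro k hk
    have h := key k hk
    rw [hcdef] at h
    refine le_trans h (le_of_eq ?_)
    congr 1
    ring
  · refine ⟨(a 1 ^ 3 + c⁻¹) ^ ((1:ℝ)/3), by positivity, ?_⟩
    intro k hk
    have hM0 : (0:ℝ) < (a 1 ^ 3 + c⁻¹) ^ ((1:ℝ)/3) := by positivity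
    have hM3 : ((a 1 ^ 3 + c⁻¹) ^ ((1:ℝ)/3)) ^ 3 = a 1 ^ 3 + c⁻¹ :=
      cube_rpow_third _ (by positivity)
    have hk1 : (1:ℝ) ≤ (k:ℝ) := by exact_mod_cast hk
    have hkpos : (0:ℝ) < (k:ℝ) := by linarith
    have hnn : 0 ≤ ((k:ℝ) - 1) * c := mul_nonneg (by linarith) hc0.le
    have hu0 : 0 < 1 / a 1 ^ 3 + ((k:ℝ) - 1) * c := by
      have : 0 < 1 / a 1 ^ 3 := by positivity
      linarith
    refine le_trans (key k hk) ?_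
    have hrpos : 0 < (k:ℝ) ^ ((1:ℝ)/3) := by positivity
    have hr3 : ((k:ℝ) ^ ((1:ℝ)/3)) ^ 3 = (k:ℝ) := cube_rpow_third _ hkpos.le
    refine le_of_cube_le (by positivity) ?_
    rw [cube_rpow_neg_third _ hu0, div_pow, hr3, hM3]
    rw [inv_eq_one_div, div_le_div_iff₀ hu0 hkpos]
    have h1 : a 1 ^ 3 * (1 / a 1 ^ 3) = 1 := by field_simp
    have h2 : c⁻¹ * c = 1 := inv_mul_cancel₀ hc0.ne'
    have h3 : 0 ≤ a 1 ^ 3 * (((k:ℝ) - 1) * c) := mul_nonneg hA.le hnn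
    have h4 : 0 ≤ c⁻¹ * (1 / a 1 ^ 3) := by positivity
    nlinarith
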